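/- For any x ≥ 3 and any positive integer m ≤ x, the sum over primes p dividing m of 1/(log p) is at most (log x)/(log log x)² + O((log x)/(log log x)³). -/

import Mathlib

/-! Auxiliary lemmas for `sum_inv_log_primeFactors`. -/

set_option maxHeartbeats 4000000

private lemma aux_inv_le {a u : ℝ} (ha : 0 < a) (hau : a ≤ u) : 1 / u ≤ u / a ^ 2 := by
  rw [div_le_div_iff₀ (by linarith) (by positivity)]
  nlinarith

/-- Chebyshev-type bound from the primorial: `θ(N) ≤ N log 4`. -/
private lemma aux_theta (N : ℕ) :
    ∑ p ∈ (Finset.range (N + 1)).filter Nat.Prime, Real.log p ≤ N * Real.log 4 := by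
  have h0 : Real.log ((primorial N : ℕ) : ℝ) =
      ∑ p ∈ (Finset.range (N + 1)).filter Nat.Prime, Real.log p := by
    rw [primorial, Nat.cast_prod, Real.log_prod]
    intro p hp
    have h2 := (Finset.mem_filter.mp hp).2.two_le
    have hp0 : (0 : ℝ) < p := by exact_mod_cast Nat.lt_of_lt_of_le (by norm_num) h2
    exact ne_of_gt hp0
  have h1 : ((primorial N : ℕ) : ℝ) ≤ ((4 : ℝ) ^ N) := by
    exact_mod_cast primorial_le_4_pow N
  have h2 : Real.log ((primorial N : ℕ) : ℝ) ≤ Real.log ((4 : ℝ) ^ N) :=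
    Real.log_le_log (by exact_mod_cast primorial_pos N) h1
  rw [h0, Real.log_pow] at h2
  exact h2

/-- A finset of naturals all of whose elements are at least 2 and at most `B` has
cardinality at most `B`. -/
private lemma aux_card {s : Finset ℕ} {B : ℝ} (hB : 0 ≤ B)
    (h : ∀ q ∈ s, 2 ≤ q ∧ (q : ℝ) ≤ B) : (s.card : ℝ) ≤ B := by
  have hsub : s ⊆ Finset.Icc 2 ⌊B⌋₊ := by
    intro q hq
    obtain ⟨h2, hqB⟩ := h q hq
    exact Finset.mem_Icc.mpr ⟨h2, Nat.le_floor hqB⟩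
  have hcard : s.card ≤ ⌊B⌋₊ + 1 - 2 := by
    have := Finset.card_le_card hsub
    rwa [Nat.card_Icc] at this
  have h1 : (s.card : ℝ) ≤ ((⌊B⌋₊ + 1 - 2 : ℕ) : ℝ) := by exact_mod_cast hcard
  have h2 : ((⌊B⌋₊ + 1 - 2 : ℕ) : ℝ) ≤ (⌊B⌋₊ : ℝ) := by
    have : (⌊B⌋₊ + 1 - 2 : ℕ) ≤ ⌊B⌋₊ := by omega
    exact_mod_cast this
  exact h1.trans (h2.trans (Nat.floor_le hB))

/-- There is an absolute constant `C` such that for all `x ≥ 3` and positive integers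
`m ≤ x`, `∑_{p ∣ m} 1/log p ≤ (log x)/(log log x)² + C·(log x)/(log log x)³`. -/
theorem sum_inv_log_primeFactors :
    ∃ C : ℝ, 0 < C ∧ ∀ (x : ℝ) (m : ℕ), 3 ≤ x → 0 < m → (m : ℝ) ≤ x →
      ∑ p ∈ m.primeFactors, 1 / Real.log p
        ≤ Real.log x / (Real.log (Real.log x)) ^ 2
            + C * (Real.log x / (Real.log (Real.log x)) ^ 3) := by
  refine ⟨200000, by norm_num, ?_⟩
  intro x m hx hm hmx
  have hx0 : (0 : ℝ) < x := by linarith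
  set T := Real.log x with hTdef
  set L := Real.log T with hLdef
  have hT1 : 1 < T := by
    rw [hTdef, Real.lt_log_iff_exp_lt hx0]
    calc Real.exp 1 < 2.7182818286 := Real.exp_one_lt_d9
      _ ≤ x := by linarith
  have hT0 : (0 : ℝ) < T := by linarith
  have hL0 : (0 : ℝ) < L := Real.log_pos hT1
  have hlog2 : (0.6931471803 : ℝ) < Real.log 2 := Real.log_two_gt_d9
  have hlog2' : (0 : ℝ) < Real.log 2 := by linarith
  -- basic facts about prime factors
  have hprime_log : ∀ p : ℕ, p.Prime → Real.log 2 ≤ Real.log p := by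
    intro p hp
    exact Real.log_le_log (by norm_num) (by exact_mod_cast hp.two_le)
  have hprime_log0 : ∀ p : ℕ, p.Prime → (0 : ℝ) < Real.log p := fun p hp =>
    lt_of_lt_of_le hlog2' (hprime_log p hp)
  -- the sum of logs of prime factors is at most `T`
  have hsumlog : ∑ p ∈ m.primeFactors, Real.log p ≤ T := by
    have hprod : (∏ p ∈ m.primeFactors, p) ∣ m := Nat.prod_primeFactors_dvd m
    have hle : (∏ p ∈ m.primeFactors, p) ≤ m := Nat.le_of_dvd hm hprod
    have hlogeq : ∑ p ∈ m.primeFactors, Real.log p =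
        Real.log (((∏ p ∈ m.primeFactors, p : ℕ) : ℝ)) := by
      rw [Nat.cast_prod, Real.log_prod]
      intro p hp
      exact ne_of_gt (by exact_mod_cast (Nat.prime_of_mem_primeFactors hp).pos)
    have hprodpos : (0 : ℝ) < ((∏ p ∈ m.primeFactors, p : ℕ) : ℝ) := by
      exact_mod_cast Finset.prod_pos fun p hp => (Nat.prime_of_mem_primeFactors hp).pos
    calc ∑ p ∈ m.primeFactors, Real.log p
        = Real.log (((∏ p ∈ m.primeFactors, p : ℕ) : ℝ)) := hlogeq
      _ ≤ Real.log m := Real.log_le_log hprodpos (by exact_mod_cast hle)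
      _ ≤ T := Real.log_le_log (by exact_mod_cast hm) hmx
  have hTL3 : 0 ≤ T / L ^ 3 := by positivity
  rcases le_or_gt L 40 with hL40 | hL40
  · -- small case: `L ≤ 40`; the trivial bound suffices
    have key : ∑ p ∈ m.primeFactors, 1 / Real.log p
        ≤ ∑ p ∈ m.primeFactors, Real.log p / (Real.log 2) ^ 2 := by
      refine Finset.sum_le_sum fun p hp => ?_
      exact aux_inv_le hlog2' (hprime_log p (Nat.prime_of_mem_primeFactors hp))
    have key2 : ∑ p ∈ m.primeFactors, Real.log p / (Real.log 2) ^ 2 ≤ T / (Real.log 2) ^ 2 := by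
      rw [← Finset.sum_div]
      gcongr
    have key3 : T / (Real.log 2) ^ 2 ≤ 200000 * (T / L ^ 3) := by
      have h1 : T / (Real.log 2) ^ 2 ≤ T / (0.6931471803 : ℝ) ^ 2 := by gcongr
      have h2 : 200000 * (T / 40 ^ 3) ≤ 200000 * (T / L ^ 3) := by gcongr
      have h3 : T / (0.6931471803 : ℝ) ^ 2 ≤ 200000 * (T / 40 ^ 3) := by
        rw [div_le_iff₀ (by norm_num)]
        ring_nf
        nlinarith [hT0]
      linarith
    have h4 : 0 ≤ T / L ^ 2 := by positivity
    calc ∑ p ∈ m.primeFactors, 1 / Real.log p ≤ T / (Real.log 2) ^ 2 := key.trans key2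
      _ ≤ 200000 * (T / L ^ 3) := key3
      _ ≤ T / L ^ 2 + 200000 * (T / L ^ 3) := by linarith
  · -- main case: `L > 40`
    set n := ⌊T⌋₊ with hndef
    have hnT : (n : ℝ) ≤ T := Nat.floor_le hT0.le
    have hTn : T < n + 1 := Nat.lt_floor_add_one T
    have hexpL : Real.exp L = T := Real.exp_log hT0
    have hLT : L + 1 ≤ T := by
      have := Real.add_one_le_exp L
      rwa [hexpL] at this
    have hLn : L ≤ (n : ℝ) := by linarith
    set Q := (Finset.range (n + 1)).filter Nat.Prime with hQdef
    -- membership facts for Q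
    have hQmem : ∀ q ∈ Q, q.Prime ∧ (q : ℝ) ≤ T := by
      intro q hq
      rw [hQdef, Finset.mem_filter, Finset.mem_range] at hq
      refine ⟨hq.2, ?_⟩
      have : q ≤ n := by omega
      calc (q : ℝ) ≤ n := by exact_mod_cast this
        _ ≤ T := hnT
    have hQlog : ∀ q ∈ Q, Real.log q ≤ L := by
      intro q hq
      obtain ⟨hqp, hqT⟩ := hQmem q hq
      exact Real.log_le_log (by exact_mod_cast hqp.pos) hqT
    -- Step 1: split the sum
    have step1 : ∑ p ∈ m.primeFactors, 1 / Real.log p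
        ≤ T / L ^ 2 + ∑ q ∈ Q, (1 / Real.log q - Real.log q / L ^ 2) := by
      classical
      set S := m.primeFactors with hSdef
      have hsplit := Finset.sum_filter_add_sum_filter_not S (fun p : ℕ => (p : ℝ) ≤ T)
        (fun p => 1 / Real.log p)
      have hS2 : ∑ p ∈ S.filter (fun p : ℕ => ¬ (p : ℝ) ≤ T), 1 / Real.log p
          ≤ ∑ p ∈ S.filter (fun p : ℕ => ¬ (p : ℝ) ≤ T), Real.log p / L ^ 2 := by
        refine Finset.sum_le_sum fun p hp => ?_
        rw [Finset.mem_filter] at hp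
        have hpP := Nat.prime_of_mem_primeFactors hp.1
        have hTp : T < (p : ℝ) := lt_of_not_ge hp.2
        have : L ≤ Real.log p := (Real.log_lt_log hT0 hTp).le
        exact aux_inv_le hL0 this
      have hS1 : ∑ p ∈ S.filter (fun p : ℕ => (p : ℝ) ≤ T), 1 / Real.log p
          = ∑ p ∈ S.filter (fun p : ℕ => (p : ℝ) ≤ T), Real.log p / L ^ 2
            + ∑ p ∈ S.filter (fun p : ℕ => (p : ℝ) ≤ T),
                (1 / Real.log p - Real.log p / L ^ 2) := by
        rw [← Finset.sum_add_distrib]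
        exact Finset.sum_congr rfl fun p _ => by ring
      have hsub : S.filter (fun p : ℕ => (p : ℝ) ≤ T) ⊆ Q := by
        intro p hp
        rw [Finset.mem_filter] at hp
        have hpP := Nat.prime_of_mem_primeFactors hp.1
        rw [hQdef, Finset.mem_filter, Finset.mem_range]
        exact ⟨by have := Nat.le_floor hp.2; omega, hpP⟩
      have hnonneg : ∀ q ∈ Q, q ∉ S.filter (fun p : ℕ => (p : ℝ) ≤ T) →
          0 ≤ 1 / Real.log q - Real.log q / L ^ 2 := by
        intro q hq _
        obtain ⟨hqp, _⟩ := hQmem q hq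
        have hu0 := hprime_log0 q hqp
        have huL := hQlog q hq
        rw [sub_nonneg]
        rw [div_le_div_iff₀ (by positivity) hu0]
        nlinarith
      have hmono : ∑ p ∈ S.filter (fun p : ℕ => (p : ℝ) ≤ T),
            (1 / Real.log p - Real.log p / L ^ 2)
          ≤ ∑ q ∈ Q, (1 / Real.log q - Real.log q / L ^ 2) :=
        Finset.sum_le_sum_of_subset_of_nonneg hsub hnonneg
      have hlogsplit : ∑ p ∈ S.filter (fun p : ℕ => (p : ℝ) ≤ T), Real.log p / L ^ 2
            + ∑ p ∈ S.filter (fun p : ℕ => ¬ (p : ℝ) ≤ T), Real.log p / L ^ 2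
          = ∑ p ∈ S, Real.log p / L ^ 2 :=
        Finset.sum_filter_add_sum_filter_not S _ _
      have hlogle : ∑ p ∈ S, Real.log p / L ^ 2 ≤ T / L ^ 2 := by
        rw [← Finset.sum_div]
        gcongr
      calc ∑ p ∈ S, 1 / Real.log p
          = ∑ p ∈ S.filter (fun p : ℕ => (p : ℝ) ≤ T), 1 / Real.log p
            + ∑ p ∈ S.filter (fun p : ℕ => ¬ (p : ℝ) ≤ T), 1 / Real.log p := hsplit.symm
        _ ≤ (∑ p ∈ S.filter (fun p : ℕ => (p : ℝ) ≤ T), Real.log p / L ^ 2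
            + ∑ p ∈ S.filter (fun p : ℕ => (p : ℝ) ≤ T), (1 / Real.log p - Real.log p / L ^ 2))
            + ∑ p ∈ S.filter (fun p : ℕ => ¬ (p : ℝ) ≤ T), Real.log p / L ^ 2 := by
            rw [← hS1]; linarith
        _ ≤ ∑ p ∈ S, Real.log p / L ^ 2 + ∑ q ∈ Q, (1 / Real.log q - Real.log q / L ^ 2) := by
            rw [← hlogsplit]; linarith
        _ ≤ T / L ^ 2 + ∑ q ∈ Q, (1 / Real.log q - Real.log q / L ^ 2) := by linarith
    -- Step 2: bound the correction sum over all primes up to n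
    -- split Q at sqrt T
    classical
    set Qs := Q.filter (fun q : ℕ => ((q : ℝ)) ^ 2 ≤ T) with hQsdef
    set Qb := Q.filter (fun q : ℕ => ¬ ((q : ℝ)) ^ 2 ≤ T) with hQbdef
    have hQsplit : ∑ q ∈ Qs, (1 / Real.log q - Real.log q / L ^ 2)
          + ∑ q ∈ Qb, (1 / Real.log q - Real.log q / L ^ 2)
        = ∑ q ∈ Q, (1 / Real.log q - Real.log q / L ^ 2) :=
      Finset.sum_filter_add_sum_filter_not Q _ _
    set E := Real.exp (L / 2) with hEdef
    have hE0 : (0 : ℝ) < E := Real.exp_pos _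
    have hE2 : E ^ 2 = T := by
      rw [hEdef, sq, ← Real.exp_add, show L / 2 + L / 2 = L by ring]
      exact hexpL
    have hLE : L ^ 3 ≤ E := by
      have h8 := Real.pow_div_factorial_le_exp (x := L / 2) (by positivity) 8
      have heq : (L / 2) ^ 8 / (Nat.factorial 8) = L ^ 8 / 10321920 := by
        norm_num [Nat.factorial]
        ring
      rw [heq] at h8
      have h8' : L ^ 8 / 10321920 ≤ E := h8
      have h40 : (40 : ℝ) ^ 5 ≤ L ^ 5 := pow_le_pow_left₀ (by norm_num) hL40.le 5
      have hprod : 10321920 * L ^ 3 ≤ L ^ 8 := by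
        nlinarith [pow_pos hL0 3, h40]
      linarith
    -- small primes part
    have hsmall : ∑ q ∈ Qs, (1 / Real.log q - Real.log q / L ^ 2) ≤ 3 / 2 * (T / L ^ 3) := by
      have hterm : ∀ q ∈ Qs, (1 / Real.log q - Real.log q / L ^ 2) ≤ 3 / 2 := by
        intro q hq
        rw [hQsdef, Finset.mem_filter] at hq
        obtain ⟨hqp, _⟩ := hQmem q hq.1
        have hu0 := hprime_log0 q hqp
        have hul := hprime_log q hqp
        have h1 : 1 / Real.log q ≤ 1 / Real.log 2 := by gcongr
        have h2 : 1 / Real.log 2 ≤ 3 / 2 := by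
          rw [div_le_div_iff₀ hlog2' (by norm_num)]
          linarith
        have h3 : 0 ≤ Real.log q / L ^ 2 := by positivity
        linarith
      have hcard : (Qs.card : ℝ) ≤ E := by
        refine aux_card hE0.le fun q hq => ?_
        rw [hQsdef, Finset.mem_filter] at hq
        obtain ⟨hqp, _⟩ := hQmem q hq.1
        refine ⟨hqp.two_le, ?_⟩
        have hq2 : ((q : ℝ)) ^ 2 ≤ E ^ 2 := by rw [hE2]; exact hq.2
        exact (pow_le_pow_iff_left₀ (Nat.cast_nonneg q) hE0.le two_ne_zero).mp hq2
      calc ∑ q ∈ Qs, (1 / Real.log q - Real.log q / L ^ 2)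
          ≤ (Qs.card : ℝ) * (3 / 2) := by
            have h := Finset.sum_le_card_nsmul Qs _ _ hterm
            rwa [nsmul_eq_mul] at h
        _ ≤ E * (3 / 2) := by gcongr
        _ ≤ 3 / 2 * (T / L ^ 3) := by
            have hETL : E ≤ T / L ^ 3 := by
              rw [le_div_iff₀ (by positivity)]
              nlinarith [hLE, hE0.le, hE2]
            linarith
    -- big primes part
    have hbiglog : ∀ q ∈ Qb, L / 2 < Real.log q := by
      intro q hq
      rw [hQbdef, Finset.mem_filter] at hq
      obtain ⟨hqp, _⟩ := hQmem q hq.1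
      have hq2 : T < ((q : ℝ)) ^ 2 := lt_of_not_ge hq.2
      have : L < Real.log (((q : ℝ)) ^ 2) := Real.log_lt_log hT0 hq2
      rw [Real.log_pow] at this
      push_cast at this
      linarith
    have hbigterm : ∀ q ∈ Qb, (1 / Real.log q - Real.log q / L ^ 2)
        ≤ 4 * (L - Real.log q) / L ^ 2 := by
      intro q hq
      have hu2 := hbiglog q hq
      have hqQ : q ∈ Q := by
        rw [hQbdef, Finset.mem_filter] at hq; exact hq.1
      obtain ⟨hqp, _⟩ := hQmem q hqQ
      have hu0 := hprime_log0 q hqp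
      have huL := hQlog q hqQ
      have key : 1 / Real.log q ≤ (Real.log q + 4 * (L - Real.log q)) / L ^ 2 := by
        rw [div_le_div_iff₀ hu0 (by positivity)]
        nlinarith [mul_nonneg (by linarith : (0:ℝ) ≤ 3 * Real.log q - L)
          (by linarith : (0:ℝ) ≤ L - Real.log q)]
      have heq : Real.log q / L ^ 2 + 4 * (L - Real.log q) / L ^ 2
          = (Real.log q + 4 * (L - Real.log q)) / L ^ 2 := by ring
      linarith
    -- the dyadic counting bound for each big prime
    have hcount : ∀ q ∈ Qb, L - Real.log q ≤ Real.log 2 *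
        (((Finset.range (n + 1)).filter (fun k : ℕ => (2:ℝ) ^ k * (q:ℝ) ≤ T)).card : ℝ) := by
      intro q hq
      have hu2 := hbiglog q hq
      have hqQ : q ∈ Q := by
        rw [hQbdef, Finset.mem_filter] at hq; exact hq.1
      obtain ⟨hqp, hqT⟩ := hQmem q hqQ
      have hu0 := hprime_log0 q hqp
      have huL := hQlog q hqQ
      set t := L - Real.log q with htdef
      have ht0 : 0 ≤ t := by simp only [htdef]; linarith
      have htL : t < L / 2 := by simp only [htdef]; linarith
      set j := ⌊t / Real.log 2⌋₊ with hjdef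
      have hjt : (j : ℝ) ≤ t / Real.log 2 := Nat.floor_le (by positivity)
      have hsub : Finset.range (j + 1)
          ⊆ (Finset.range (n + 1)).filter (fun k : ℕ => (2:ℝ) ^ k * (q:ℝ) ≤ T) := by
        intro k hk
        rw [Finset.mem_range] at hk
        have hkj : (k : ℝ) ≤ (j : ℝ) := by exact_mod_cast Nat.lt_succ_iff.mp hk
        have hkt : (k : ℝ) * Real.log 2 ≤ t := by
          rw [← le_div_iff₀ hlog2']
          linarith
        have hkn : k ≤ n := by
          have h1 : (k : ℝ) ≤ t / Real.log 2 := le_trans hkj hjt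
          have h2 : t / Real.log 2 ≤ L := by
            rw [div_le_iff₀ hlog2']
            nlinarith
          have : (k : ℝ) ≤ (n : ℝ) := by linarith
          exact_mod_cast this
        rw [Finset.mem_filter, Finset.mem_range]
        refine ⟨by omega, ?_⟩
        have hpos : (0:ℝ) < (2:ℝ) ^ k * q := by
          have : (0:ℝ) < (q:ℝ) := by exact_mod_cast hqp.pos
          positivity
        rw [← Real.log_le_log_iff hpos hT0,
          Real.log_mul (by positivity) (by exact_mod_cast hqp.pos.ne'),
          Real.log_pow, ← hLdef]
        simp only [htdef] at hkt
        linarith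
      have hcard : j + 1 ≤ ((Finset.range (n + 1)).filter
          (fun k : ℕ => (2:ℝ) ^ k * (q:ℝ) ≤ T)).card := by
        calc j + 1 = (Finset.range (j + 1)).card := (Finset.card_range _).symm
          _ ≤ _ := Finset.card_le_card hsub
      have hlt : t < ((j : ℝ) + 1) * Real.log 2 := by
        have h1 : t / Real.log 2 < (j : ℝ) + 1 := Nat.lt_floor_add_one _
        rw [div_lt_iff₀ hlog2'] at h1
        linarith
      have hcard' : ((j : ℝ) + 1) ≤ (((Finset.range (n + 1)).filter
          (fun k : ℕ => (2:ℝ) ^ k * (q:ℝ) ≤ T)).card : ℝ) := by exact_mod_cast hcard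
      nlinarith
    -- swap the double counting
    have hswap : ∑ q ∈ Qb, (((Finset.range (n + 1)).filter
          (fun k : ℕ => (2:ℝ) ^ k * (q:ℝ) ≤ T)).card : ℝ)
        = ∑ k ∈ Finset.range (n + 1),
            ((Qb.filter (fun q : ℕ => (2:ℝ) ^ k * (q:ℝ) ≤ T)).card : ℝ) := by
      have hnat : ∑ q ∈ Qb, ((Finset.range (n + 1)).filter
            (fun k : ℕ => (2:ℝ) ^ k * (q:ℝ) ≤ T)).card
          = ∑ k ∈ Finset.range (n + 1),
              (Qb.filter (fun q : ℕ => (2:ℝ) ^ k * (q:ℝ) ≤ T)).card := by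
        simp_rw [Finset.card_filter]
        exact Finset.sum_comm
      exact_mod_cast hnat
    -- bound the count for each k
    have hNk : ∀ k : ℕ, ((Qb.filter (fun q : ℕ => (2:ℝ) ^ k * (q:ℝ) ≤ T)).card : ℝ)
        ≤ 4 * Real.log 2 * T / L * (1 / 2) ^ k := by
      intro k
      set R := Qb.filter (fun q : ℕ => (2:ℝ) ^ k * (q:ℝ) ≤ T) with hRdef
      set Nk := ⌊T / 2 ^ k⌋₊ with hNkdef
      have hRsub : R ⊆ (Finset.range (Nk + 1)).filter Nat.Prime := by
        intro q hq
        rw [hRdef, Finset.mem_filter] at hq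
        have hqQb := hq.1
        have hqQ : q ∈ Q := by
          rw [hQbdef, Finset.mem_filter] at hqQb; exact hqQb.1
        obtain ⟨hqp, _⟩ := hQmem q hqQ
        have hqle : (q : ℝ) ≤ T / 2 ^ k := by
          rw [le_div_iff₀ (by positivity)]
          have := hq.2
          nlinarith [this]
        rw [Finset.mem_filter, Finset.mem_range]
        exact ⟨Nat.lt_succ_of_le (Nat.le_floor hqle), hqp⟩
      have hlow : (R.card : ℝ) * (L / 2) ≤ ∑ q ∈ R, Real.log q := by
        have h := Finset.card_nsmul_le_sum R (fun q => Real.log q) (L / 2)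
          (fun q hq => by
            have : q ∈ Qb := by rw [hRdef, Finset.mem_filter] at hq; exact hq.1
            exact (hbiglog q this).le)
        rwa [nsmul_eq_mul] at h
      have hup : ∑ q ∈ R, Real.log q
          ≤ ∑ q ∈ (Finset.range (Nk + 1)).filter Nat.Prime, Real.log q := by
        refine Finset.sum_le_sum_of_subset_of_nonneg hRsub fun q hq _ => ?_
        rw [Finset.mem_filter] at hq
        exact Real.log_nonneg (by exact_mod_cast hq.2.one_lt.le)
      have htheta := aux_theta Nk
      have hNkT : (Nk : ℝ) ≤ T / 2 ^ k := Nat.floor_le (by positivity)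
      have hlog4 : Real.log 4 = 2 * Real.log 2 := by
        rw [show (4:ℝ) = 2 ^ 2 by norm_num, Real.log_pow]
        push_cast; ring
      have hlog4nn : (0:ℝ) ≤ Real.log 4 := by rw [hlog4]; positivity
      have h7 : (R.card : ℝ) * (L / 2) ≤ T / 2 ^ k * (2 * Real.log 2) := by
        calc (R.card : ℝ) * (L / 2) ≤ ∑ q ∈ R, Real.log q := hlow
          _ ≤ ∑ q ∈ (Finset.range (Nk + 1)).filter Nat.Prime, Real.log q := hup
          _ ≤ (Nk : ℝ) * Real.log 4 := htheta
          _ ≤ (T / 2 ^ k) * Real.log 4 := by gcongr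
          _ = T / 2 ^ k * (2 * Real.log 2) := by rw [hlog4]
      have h8 := mul_le_mul_of_nonneg_right h7
        (le_of_lt (pow_pos two_pos k) : (0:ℝ) ≤ 2 ^ k)
      have hA : T / 2 ^ k * 2 ^ k = T := div_mul_cancel₀ T (by positivity)
      have h9 : T / 2 ^ k * (2 * Real.log 2) * 2 ^ k = T * (2 * Real.log 2) := by
        rw [mul_right_comm, hA]
      rw [h9] at h8
      have h5' : (R.card : ℝ) * L * 2 ^ k ≤ 4 * Real.log 2 * T := by nlinarith [h8]
      have hhalf : ((1:ℝ) / 2) ^ k = 1 / 2 ^ k := by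
        rw [div_pow, one_pow]
      rw [hhalf, mul_one_div, le_div_iff₀ (pow_pos two_pos k), le_div_iff₀ hL0]
      nlinarith [h5']
    -- sum the counts
    have hsumcount : ∑ k ∈ Finset.range (n + 1),
          ((Qb.filter (fun q : ℕ => (2:ℝ) ^ k * (q:ℝ) ≤ T)).card : ℝ)
        ≤ 4 * Real.log 2 * T / L * 2 := by
      calc ∑ k ∈ Finset.range (n + 1),
            ((Qb.filter (fun q : ℕ => (2:ℝ) ^ k * (q:ℝ) ≤ T)).card : ℝ)
          ≤ ∑ k ∈ Finset.range (n + 1), 4 * Real.log 2 * T / L * (1 / 2) ^ k :=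
            Finset.sum_le_sum fun k _ => hNk k
        _ = 4 * Real.log 2 * T / L * ∑ k ∈ Finset.range (n + 1), ((1:ℝ) / 2) ^ k := by
            rw [Finset.mul_sum]
        _ ≤ 4 * Real.log 2 * T / L * 2 := by
            have : (0:ℝ) ≤ 4 * Real.log 2 * T / L := by positivity
            exact mul_le_mul_of_nonneg_left (sum_geometric_two_le _) this
    clear_value Qs Qb Q E n L T
    -- bound D' = ∑_{q ∈ Qb} (L - log q)
    have hD : ∑ q ∈ Qb, (L - Real.log q) ≤ 4 * T / L := by
      have h1 : ∑ q ∈ Qb, (L - Real.log q)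
          ≤ ∑ q ∈ Qb, Real.log 2 * (((Finset.range (n + 1)).filter
              (fun k : ℕ => (2:ℝ) ^ k * (q:ℝ) ≤ T)).card : ℝ) :=
        Finset.sum_le_sum hcount
      have h2 : ∑ q ∈ Qb, Real.log 2 * (((Finset.range (n + 1)).filter
              (fun k : ℕ => (2:ℝ) ^ k * (q:ℝ) ≤ T)).card : ℝ)
          = Real.log 2 * ∑ q ∈ Qb, (((Finset.range (n + 1)).filter
              (fun k : ℕ => (2:ℝ) ^ k * (q:ℝ) ≤ T)).card : ℝ) := by
        rw [Finset.mul_sum]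
      have hlog2sq : (Real.log 2) ^ 2 ≤ 1 / 2 := by
        nlinarith [Real.log_two_lt_d9, hlog2']
      have h3 : Real.log 2 * (4 * Real.log 2 * T / L * 2) ≤ 4 * T / L := by
        have hTL : (0:ℝ) ≤ T / L := by positivity
        have : Real.log 2 * (4 * Real.log 2 * T / L * 2) = 8 * (Real.log 2) ^ 2 * (T / L) := by
          ring
        rw [this]
        calc 8 * (Real.log 2) ^ 2 * (T / L) ≤ 8 * (1 / 2) * (T / L) := by
              apply mul_le_mul_of_nonneg_right _ hTL
              linarith
          _ = 4 * T / L := by ring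
      have h4 : Real.log 2 * ∑ q ∈ Qb, (((Finset.range (n + 1)).filter
              (fun k : ℕ => (2:ℝ) ^ k * (q:ℝ) ≤ T)).card : ℝ)
          ≤ Real.log 2 * (4 * Real.log 2 * T / L * 2) := by
        rw [hswap]
        exact mul_le_mul_of_nonneg_left hsumcount hlog2'.le
      linarith
    -- big primes part
    have hbig : ∑ q ∈ Qb, (1 / Real.log q - Real.log q / L ^ 2) ≤ 16 * (T / L ^ 3) := by
      calc ∑ q ∈ Qb, (1 / Real.log q - Real.log q / L ^ 2)
          ≤ ∑ q ∈ Qb, 4 * (L - Real.log q) / L ^ 2 := Finset.sum_le_sum hbigterm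
        _ = 4 * (∑ q ∈ Qb, (L - Real.log q)) / L ^ 2 := by
            rw [← Finset.sum_div, ← Finset.mul_sum]
        _ ≤ 4 * (4 * T / L) / L ^ 2 := by gcongr
        _ = 16 * (T / L ^ 3) := by
            field_simp
            ring
    -- final assembly
    calc ∑ p ∈ m.primeFactors, 1 / Real.log p
        ≤ T / L ^ 2 + ∑ q ∈ Q, (1 / Real.log q - Real.log q / L ^ 2) := step1
      _ = T / L ^ 2 + (∑ q ∈ Qs, (1 / Real.log q - Real.log q / L ^ 2)
          + ∑ q ∈ Qb, (1 / Real.log q - Real.log q / L ^ 2)) := by rw [hQsplit]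
      _ ≤ T / L ^ 2 + (3 / 2 * (T / L ^ 3) + 16 * (T / L ^ 3)) := by linarith
      _ ≤ T / L ^ 2 + 200000 * (T / L ^ 3) := by linarith
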